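/- Let μ be an arbitrary Borel measure on ℝ² (with the Euclidean metric) satisfying 0 < μ(B) < ∞ for every open ball B, and assume that for the point (0,0) condition (C) fails, i.e. limsup_{r→∞} μ(B_{r+1}(0,0))/μ(B_r(0,0)) = ∞. Then there exists f ∈ L¹_loc(μ) and points x₀, x₁ ∈ ℝ² such that M^c f(x₀) = ∞ on a set of positive μ-measure while M^c f(x₁) < ∞; in particular, M^c does not possess the dichotomy property. -/

import Mathlib

open MeasureTheory Metric Filter Set ENNReal

/-- The centered Hardy–Littlewood maximal function of `f` at `x`,
with respect to the measure `μ`. -/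
noncomputable def centeredMaximal {X : Type*} [MeasurableSpace X] [PseudoMetricSpace X]
    (μ : Measure X) (f : X → ℝ) (x : X) : ℝ≥0∞ :=
  ⨆ (r : ℝ) (_ : 0 < r),
    (∫⁻ y in Metric.ball x r, ENNReal.ofReal |f y| ∂μ) / μ (Metric.ball x r)

/-- The non-centered Hardy–Littlewood maximal function of `f` at `x`:
the supremum is taken over all open balls containing `x`. -/
noncomputable def noncenteredMaximal {X : Type*} [MeasurableSpace X] [PseudoMetricSpace X]
    (μ : Measure X) (f : X → ℝ) (x : X) : ℝ≥0∞ :=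
  ⨆ (c : X) (r : ℝ) (_ : 0 < r) (_ : x ∈ Metric.ball c r),
    (∫⁻ y in Metric.ball c r, ENNReal.ofReal |f y| ∂μ) / μ (Metric.ball c r)

/-- `f ∈ L¹_loc(μ)`: `∫_B |f| dμ < ∞` for every open ball `B`. -/
def LocallyIntegrableBall {X : Type*} [MeasurableSpace X] [PseudoMetricSpace X]
    (μ : Measure X) (f : X → ℝ) : Prop :=
  ∀ (c : X) (r : ℝ), 0 < r → (∫⁻ y in Metric.ball c r, ENNReal.ofReal |f y| ∂μ) < ⊤

/- ### Auxiliary geometric definitions and lemmas -/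

/-- The unit vector `±eᵢ` associated with a sector index. -/
noncomputable def dichDir (j : Fin 2 × Bool) : EuclideanSpace ℝ (Fin 2) :=
  EuclideanSpace.single j.1 (if j.2 then (1:ℝ) else -1)

/-- The (closed) sector of points forming an angle of at most `60°` with `dichDir j`. -/
def dichSector (j : Fin 2 × Bool) : Set (EuclideanSpace ℝ (Fin 2)) :=
  {y | ‖y‖ ≤ 2 * ((if j.2 then (1:ℝ) else -1) * y j.1)}

lemma dichDir_norm (j : Fin 2 × Bool) : ‖dichDir j‖ = 1 := by
  rw [dichDir, EuclideanSpace.norm_single]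
  rcases j.2 <;> simp

lemma inner_dichDir (j : Fin 2 × Bool) (y : EuclideanSpace ℝ (Fin 2)) :
    (inner ℝ y (dichDir j) : ℝ) = (if j.2 then (1:ℝ) else -1) * y j.1 := by
  rw [dichDir, PiLp.inner_apply]
  simp [EuclideanSpace.single_apply, RCLike.inner_apply, mul_comm]

lemma sector_cover (y : EuclideanSpace ℝ (Fin 2)) : ∃ j, y ∈ dichSector j := by
  rcases le_total |y 0| |y 1| with hc | hc
  · refine ⟨⟨1, decide (0 ≤ y 1)⟩, ?_⟩
    have hnorm : ‖y‖ ≤ 2 * |y 1| := by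
      rw [EuclideanSpace.norm_eq]
      have : ∑ i : Fin 2, ‖y i‖ ^ 2 ≤ (2 * |y 1|) ^ 2 := by
        rw [Fin.sum_univ_two]
        simp only [Real.norm_eq_abs]
        nlinarith [abs_nonneg (y 0), abs_nonneg (y 1), sq_abs (y 0), sq_abs (y 1)]
      calc √(∑ i : Fin 2, ‖y i‖ ^ 2) ≤ √((2 * |y 1|) ^ 2) := Real.sqrt_le_sqrt this
        _ = 2 * |y 1| := Real.sqrt_sq (by positivity)
    simp only [dichSector, Set.mem_setOf_eq]
    rcases le_or_gt 0 (y 1) with hs | hs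
    · simpa [hs, abs_of_nonneg hs] using hnorm
    · rw [abs_of_neg hs] at hnorm
      simpa [not_le.mpr hs, hs.le] using hnorm
  · refine ⟨⟨0, decide (0 ≤ y 0)⟩, ?_⟩
    have hnorm : ‖y‖ ≤ 2 * |y 0| := by
      rw [EuclideanSpace.norm_eq]
      have : ∑ i : Fin 2, ‖y i‖ ^ 2 ≤ (2 * |y 0|) ^ 2 := by
        rw [Fin.sum_univ_two]
        simp only [Real.norm_eq_abs]
        nlinarith [abs_nonneg (y 0), abs_nonneg (y 1), sq_abs (y 0), sq_abs (y 1)]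
      calc √(∑ i : Fin 2, ‖y i‖ ^ 2) ≤ √((2 * |y 0|) ^ 2) := Real.sqrt_le_sqrt this
        _ = 2 * |y 0| := Real.sqrt_sq (by positivity)
    simp only [dichSector, Set.mem_setOf_eq]
    rcases le_or_gt 0 (y 0) with hs | hs
    · simpa [hs, abs_of_nonneg hs] using hnorm
    · rw [abs_of_neg hs] at hnorm
      simpa [not_le.mpr hs, hs.le] using hnorm

lemma sector_far (j : Fin 2 × Bool) (y : EuclideanSpace ℝ (Fin 2))
    (hy : y ∈ dichSector j) (hn : 200 ≤ ‖y‖) :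
    ‖y - (100:ℝ) • dichDir j‖ ≤ ‖y‖ - 25 := by
  have hinner : (50:ℝ) * ‖y‖ ≤ inner ℝ y ((100:ℝ) • dichDir j) := by
    rw [real_inner_smul_right, inner_dichDir]
    have := hy
    simp only [dichSector, Set.mem_setOf_eq] at this
    nlinarith
  have hsq : ‖y - (100:ℝ) • dichDir j‖ ^ 2 ≤ (‖y‖ - 25) ^ 2 := by
    rw [norm_sub_sq_real]
    have h100 : ‖(100:ℝ) • dichDir j‖ = 100 := by
      rw [norm_smul, dichDir_norm]; simp
    rw [h100]
    nlinarith
  calc ‖y - (100:ℝ) • dichDir j‖ = √(‖y - (100:ℝ) • dichDir j‖ ^ 2) :=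
        (Real.sqrt_sq (norm_nonneg _)).symm
    _ ≤ √((‖y‖ - 25) ^ 2) := Real.sqrt_le_sqrt hsq
    _ = ‖y‖ - 25 := Real.sqrt_sq (by linarith)

/-- If for a Borel measure `μ` on `ℝ²` (positive finite on balls) condition
(C) fails at the origin, i.e. `limsup_{r→∞} μ(B_{r+1}(0,0))/μ(B_r(0,0)) = ∞`, then there is
`f ∈ L¹_loc(μ)` and points `x₀, x₁` with `M^c f(x₀) = ∞`, the set `{M^c f = ∞}` of positive
measure, and `M^c f(x₁) < ∞`; in particular `M^c` fails the dichotomy property. -/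
theorem no_dichotomy_of_not_condC (μ : Measure (EuclideanSpace ℝ (Fin 2)))
    (hμ : ∀ (c : EuclideanSpace ℝ (Fin 2)) (r : ℝ), 0 < r →
      0 < μ (Metric.ball c r) ∧ μ (Metric.ball c r) < ⊤)
    (h : Filter.limsup (fun r : ℝ =>
        μ (Metric.ball (0 : EuclideanSpace ℝ (Fin 2)) (r + 1)) /
          μ (Metric.ball (0 : EuclideanSpace ℝ (Fin 2)) r)) Filter.atTop = ⊤) :
    ∃ f : EuclideanSpace ℝ (Fin 2) → ℝ, LocallyIntegrableBall μ f ∧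
      (∃ x₀, centeredMaximal μ f x₀ = ⊤) ∧
      0 < μ {x | centeredMaximal μ f x = ⊤} ∧
      (∃ x₁, centeredMaximal μ f x₁ < ⊤) ∧
      ¬ (μ {x | centeredMaximal μ f x = ⊤} = 0 ∨
          {x | centeredMaximal μ f x = ⊤} = Set.univ) := by
  classical
  set F : ℝ → ℝ≥0∞ := fun r => μ (Metric.ball (0 : EuclideanSpace ℝ (Fin 2)) r) with hFdef
  have hFmono : ∀ {r s : ℝ}, r ≤ s → F r ≤ F s := fun hrs =>
    measure_mono (Metric.ball_subset_ball hrs)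
  have hF0 : ∀ r : ℝ, 0 < r → F r ≠ 0 := fun r hr => (hμ 0 r hr).1.ne'
  have hFt : ∀ r : ℝ, F r ≠ ⊤ := by
    intro r
    rcases le_or_gt r 0 with hr | hr
    · have : Metric.ball (0 : EuclideanSpace ℝ (Fin 2)) r = ∅ := Metric.ball_eq_empty.mpr hr
      simp [hFdef, this]
    · exact (hμ 0 r hr).2.ne
  -- Step 1: extraction of large ratios from the failure of condition (C)
  have hbig : ∀ (M : ℝ≥0∞), M ≠ ⊤ → ∀ R : ℝ, ∃ r : ℝ, R ≤ r ∧ 2 ≤ r ∧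
      M * F (r - 1) ≤ F (r + 1) := by
    intro M hM R
    have hnotev : ¬ (∀ᶠ r : ℝ in Filter.atTop, F (r + 1) / F r ≤ M) := by
      intro hev
      have hmem : M ∈ {a : ℝ≥0∞ | ∀ᶠ r : ℝ in Filter.atTop, F (r+1) / F r ≤ a} := hev
      exact hM ((sInf_eq_top.mp (by rw [← Filter.limsup_eq]; exact h)) M hmem)
    have hfreq : ∃ᶠ r : ℝ in Filter.atTop, ¬ (F (r+1) / F r ≤ M) := Filter.not_eventually.mp hnotev
    obtain ⟨r, hrR, hr⟩ := Filter.frequently_atTop.mp hfreq (max R 2)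
    refine ⟨r, le_trans (le_max_left _ _) hrR, le_trans (le_max_right _ _) hrR, ?_⟩
    have h2 : M * F r < F (r+1) := ENNReal.mul_lt_of_lt_div (not_le.mp hr)
    calc M * F (r-1) ≤ M * F r := mul_le_mul_right (hFmono (by linarith)) M
      _ ≤ F (r+1) := h2.le
  -- Step 2: the sequence of radii with very large mass ratios
  obtain ⟨g, hg0, hgstep, hgratio⟩ : ∃ g : ℕ → ℝ, (300 ≤ g 0) ∧ (∀ k, g k + 20 ≤ g (k+1)) ∧
      (∀ k, ((8*(k+1)*2^k * (8*(k+1)*2^k) : ℕ) : ℝ≥0∞) * F (g k - 1) ≤ F (g k + 1)) := by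
    have pick : ∀ (k : ℕ) (R : ℝ), ∃ r : ℝ, R ≤ r ∧ 2 ≤ r ∧
        ((8*(k+1)*2^k * (8*(k+1)*2^k) : ℕ) : ℝ≥0∞) * F (r - 1) ≤ F (r + 1) := by
      intro k R
      exact hbig _ (ENNReal.natCast_ne_top _) R
    choose pf hpf1 hpf2 hpf3 using pick
    refine ⟨fun n => Nat.rec (pf 0 300) (fun k r => pf (k+1) (r + 20)) n, ?_, ?_, ?_⟩
    · exact hpf1 0 300
    · intro k; exact hpf1 (k+1) _
    · intro k; cases k with
      | zero => exact hpf3 0 300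
      | succ k => exact hpf3 (k+1) _
  set Pn : ℕ → ℕ := fun k => 8*(k+1)*2^k with hPn
  have hPn2 : ∀ k, 2 ≤ Pn k := by
    intro k
    have : (1:ℕ) ≤ (k+1)*2^k := Nat.one_le_iff_ne_zero.mpr (by positivity)
    calc (2:ℕ) ≤ 8 * 1 := by norm_num
      _ ≤ 8 * ((k+1)*2^k) := by omega
      _ = Pn k := by rw [hPn]; ring
  have hgratio' : ∀ k, ((Pn k * Pn k : ℕ) : ℝ≥0∞) * F (g k - 1) ≤ F (g k + 1) := by
    intro k
    have hPnk : Pn k = 8*(k+1)*2^k := by rw [hPn]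
    rw [hPnk]
    exact hgratio k
  have hg300 : ∀ k, 300 ≤ g k := by
    intro k; induction k with
    | zero => exact hg0
    | succ k ih => linarith [hgstep k]
  have hgmono : ∀ k l, k < l → g k + 20 ≤ g l := by
    intro k l hkl
    induction l with
    | zero => omega
    | succ l ih =>
      rcases Nat.lt_succ_iff_lt_or_eq.mp hkl with hlt | heq
      · have h1 := hgstep l
        have := ih hlt
        linarith
      · subst heq; exact hgstep k
  have hglin : ∀ k : ℕ, 300 + 20*(k:ℝ) ≤ g k := by
    intro k; induction k with
    | zero => simpa using hg0
    | succ k ih => push_cast; linarith [hgstep k]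
  have hFg : ∀ k, F (g k - 1) ≠ 0 := fun k => hF0 _ (by linarith [hg300 k])
  clear_value F Pn
  have hFball : ∀ s : ℝ, μ (Metric.ball (0 : EuclideanSpace ℝ (Fin 2)) s) = F s :=
    fun s => by rw [hFdef]
  -- Step 3: the cut radius t k inside the window
  set t : ℕ → ℝ := fun k =>
    sInf {s : ℝ | g k - 1 ≤ s ∧ ((Pn k : ℕ) : ℝ≥0∞) * F (g k - 1) < F s} with htdef
  have hmem : ∀ k, (g k + 1) ∈ {s : ℝ | g k - 1 ≤ s ∧ ((Pn k : ℕ) : ℝ≥0∞) * F (g k - 1) < F s} := by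
    intro k
    constructor
    · linarith
    · calc ((Pn k : ℕ) : ℝ≥0∞) * F (g k - 1)
          < ((Pn k * Pn k : ℕ) : ℝ≥0∞) * F (g k - 1) := by
            refine ENNReal.mul_lt_mul_left (hFg k) (hFt _) ?_
            have h2 := hPn2 k; exact_mod_cast (by nlinarith : Pn k < Pn k * Pn k)
        _ ≤ F (g k + 1) := hgratio' k
  have hbdd : ∀ k, BddBelow {s : ℝ | g k - 1 ≤ s ∧ ((Pn k : ℕ) : ℝ≥0∞) * F (g k - 1) < F s} :=
    fun k => ⟨g k - 1, fun s hs => hs.1⟩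
  have ht_ge : ∀ k, g k - 1 ≤ t k := fun k => le_csInf ⟨_, hmem k⟩ (fun s hs => hs.1)
  have ht_le : ∀ k, t k ≤ g k + 1 := fun k => csInf_le (hbdd k) (hmem k)
  have ht1 : ∀ k, ∀ s : ℝ, s < t k → F s ≤ ((Pn k : ℕ) : ℝ≥0∞) * F (g k - 1) := by
    intro k s hs
    by_cases hge : g k - 1 ≤ s
    · by_contra hcon
      have hmem' : s ∈ {s : ℝ | g k - 1 ≤ s ∧ ((Pn k : ℕ) : ℝ≥0∞) * F (g k - 1) < F s} :=
        ⟨hge, not_le.mp hcon⟩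
      exact absurd (csInf_le (hbdd k) hmem') (not_le.mpr hs)
    · calc F s ≤ F (g k - 1) := hFmono (by linarith [not_le.mp hge])
        _ ≤ ((Pn k : ℕ) : ℝ≥0∞) * F (g k - 1) :=
          le_mul_of_one_le_left zero_le (by exact_mod_cast (by have := hPn2 k; omega : 1 ≤ Pn k))
  have ht2 : ∀ k, F (t k) ≤ ((Pn k : ℕ) : ℝ≥0∞) * F (g k - 1) := by
    intro k
    have hsub : Metric.ball (0 : EuclideanSpace ℝ (Fin 2)) (t k)
        ⊆ ⋃ n : ℕ, Metric.ball (0 : EuclideanSpace ℝ (Fin 2)) (t k - 1/(n+1)) := by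
      intro y hy
      rw [Metric.mem_ball, dist_zero_right] at hy
      obtain ⟨n, hn⟩ := exists_nat_one_div_lt (sub_pos.mpr hy)
      exact Set.mem_iUnion.mpr ⟨n, by rw [Metric.mem_ball, dist_zero_right]; linarith⟩
    have hdir : Directed (fun x1 x2 : Set (EuclideanSpace ℝ (Fin 2)) => x1 ⊆ x2)
        (fun n : ℕ => Metric.ball (0 : EuclideanSpace ℝ (Fin 2)) (t k - 1/(n+1))) := by
      refine (Monotone.directed_le ?_)
      intro n m hnm
      refine Metric.ball_subset_ball ?_
      have h1 : (1:ℝ)/(m+1) ≤ 1/(n+1) := by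
        apply one_div_le_one_div_of_le <;> [positivity; exact_mod_cast by omega]
      linarith
    calc F (t k) ≤ μ (⋃ n : ℕ, Metric.ball (0 : EuclideanSpace ℝ (Fin 2)) (t k - 1/(n+1))) := by
          rw [hFdef]; exact measure_mono hsub
      _ = ⨆ n : ℕ, μ (Metric.ball (0 : EuclideanSpace ℝ (Fin 2)) (t k - 1/(n+1))) :=
          hdir.measure_iUnion
      _ ≤ ((Pn k : ℕ) : ℝ≥0∞) * F (g k - 1) := by
          refine iSup_le fun n => ?_
          have hpos : (0:ℝ) < 1/(n+1) := by positivity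
          have := ht1 k (t k - 1/(n+1)) (by linarith)
          rw [hFdef] at this ⊢
          exact this
  clear_value t
  -- the heavy annulus H k
  set H : ℕ → Set (EuclideanSpace ℝ (Fin 2)) := fun k =>
    Metric.ball (0 : EuclideanSpace ℝ (Fin 2)) (g k + 1) \
      Metric.ball (0 : EuclideanSpace ℝ (Fin 2)) (t k) with hHdef
  have hH : ∀ k, ((32*(k+1)^2*4^k : ℕ) : ℝ≥0∞) * F (g k - 1) ≤ μ (H k) := by
    intro k
    have hsub : Metric.ball (0 : EuclideanSpace ℝ (Fin 2)) (g k + 1)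
        ⊆ H k ∪ Metric.ball (0 : EuclideanSpace ℝ (Fin 2)) (t k) := by
      intro y hy
      by_cases hyt : y ∈ Metric.ball (0 : EuclideanSpace ℝ (Fin 2)) (t k)
      · exact Or.inr hyt
      · exact Or.inl ⟨hy, hyt⟩
    have h1 : F (g k + 1) ≤ μ (H k) + ((Pn k : ℕ) : ℝ≥0∞) * F (g k - 1) := by
      calc F (g k + 1) = μ (Metric.ball (0 : EuclideanSpace ℝ (Fin 2)) (g k + 1)) :=
            (hFball _).symm
        _ ≤ μ (H k ∪ Metric.ball (0 : EuclideanSpace ℝ (Fin 2)) (t k)) := measure_mono hsub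
        _ ≤ μ (H k) + μ (Metric.ball (0 : EuclideanSpace ℝ (Fin 2)) (t k)) := measure_union_le _ _
        _ = μ (H k) + F (t k) := by rw [hFball]
        _ ≤ μ (H k) + ((Pn k : ℕ) : ℝ≥0∞) * F (g k - 1) := add_le_add_right (ht2 k) _
    have hnat : 32*(k+1)^2*4^k + Pn k ≤ Pn k * Pn k := by
      have hPnk : Pn k = 8*(k+1)*2^k := by rw [hPn]
      have h4 : (4:ℕ)^k = 2^k * 2^k := by rw [show (4:ℕ) = 2*2 by norm_num, mul_pow]
      have hs : 1 ≤ 2^k := Nat.one_le_two_pow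
      have hk1 : 1 ≤ k+1 := Nat.le_add_left 1 k
      rw [hPnk, h4]
      nlinarith [mul_le_mul hs hk1 (by omega) (by omega), sq_nonneg (2^k), sq_nonneg (k+1)]
    have h2 : ((32*(k+1)^2*4^k : ℕ) : ℝ≥0∞) * F (g k - 1) + ((Pn k : ℕ) : ℝ≥0∞) * F (g k - 1)
        ≤ μ (H k) + ((Pn k : ℕ) : ℝ≥0∞) * F (g k - 1) := by
      calc ((32*(k+1)^2*4^k : ℕ) : ℝ≥0∞) * F (g k - 1) + ((Pn k : ℕ) : ℝ≥0∞) * F (g k - 1)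
          = ((32*(k+1)^2*4^k + Pn k : ℕ) : ℝ≥0∞) * F (g k - 1) := by
            push_cast; ring
        _ ≤ ((Pn k * Pn k : ℕ) : ℝ≥0∞) * F (g k - 1) :=
            mul_le_mul_left (by exact_mod_cast hnat) _
        _ ≤ F (g k + 1) := hgratio' k
        _ ≤ μ (H k) + ((Pn k : ℕ) : ℝ≥0∞) * F (g k - 1) := h1
    exact (ENNReal.add_le_add_iff_right (ENNReal.mul_ne_top (ENNReal.natCast_ne_top _)
      (hFt _))).mp h2
  -- Step 4: heavy sector of each H k, and pigeonhole
  have hjex : ∀ k, ∃ j : Fin 2 × Bool, μ (H k) ≤ 4 * μ (dichSector j ∩ H k) := by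
    intro k
    obtain ⟨j0, -, hj0⟩ := Finset.exists_max_image Finset.univ
      (fun j : Fin 2 × Bool => μ (dichSector j ∩ H k)) ⟨(0, true), Finset.mem_univ _⟩
    refine ⟨j0, ?_⟩
    have hcov : H k ⊆ ⋃ j : Fin 2 × Bool, (dichSector j ∩ H k) := by
      intro y hy
      obtain ⟨j, hj⟩ := sector_cover y
      exact Set.mem_iUnion.mpr ⟨j, hj, hy⟩
    calc μ (H k) ≤ ∑' j : Fin 2 × Bool, μ (dichSector j ∩ H k) :=
          le_trans (measure_mono hcov) (measure_iUnion_le _)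
      _ = ∑ j : Fin 2 × Bool, μ (dichSector j ∩ H k) := tsum_fintype _
      _ ≤ (Finset.univ : Finset (Fin 2 × Bool)).card • μ (dichSector j0 ∩ H k) :=
          Finset.sum_le_card_nsmul _ _ _ (fun j _ => hj0 j (Finset.mem_univ j))
      _ = 4 * μ (dichSector j0 ∩ H k) := by
          rw [Finset.card_univ]
          simp [nsmul_eq_mul]
  choose jf hjf using hjex
  clear_value H
  obtain ⟨jstar, hfiber⟩ := Finite.exists_infinite_fiber jf
  have hjstar : ∀ n : ℕ, ∃ k, n ≤ k ∧ jf k = jstar := by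
    intro n
    obtain ⟨k, hk1, hk2⟩ := (Set.infinite_coe_iff.mp hfiber).exists_gt n
    exact ⟨k, hk2.le, hk1⟩
  -- Step 5: construction of f
  set β : ℕ → ℝ := fun k => t k - 2 with hβdef
  have hβlb : ∀ k, g k - 3 ≤ β k := fun k => by have := ht_ge k; rw [hβdef]; dsimp; linarith
  have hβub : ∀ k, β k ≤ g k - 1 := fun k => by have := ht_le k; rw [hβdef]; dsimp; linarith
  have hβ297 : ∀ k, 297 ≤ β k := fun k => by have := hβlb k; have := hg300 k; linarith
  set z : ℕ → EuclideanSpace ℝ (Fin 2) := fun k => (-(β k - 2)) • dichDir jstar with hzdef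
  set C : ℕ → Set (EuclideanSpace ℝ (Fin 2)) := fun k => Metric.ball (z k) 1 with hCdef
  set D : ℕ → Set (EuclideanSpace ℝ (Fin 2)) := fun k => if jf k = jstar then C k else ∅
    with hDdef
  have hzn : ∀ k, ‖z k‖ = β k - 2 := by
    intro k
    rw [hzdef]
    dsimp only
    rw [norm_smul, dichDir_norm, mul_one, Real.norm_eq_abs, abs_neg,
      abs_of_nonneg (by have := hβ297 k; linarith)]
  have hμC0 : ∀ k, μ (C k) ≠ 0 := fun k => (hμ (z k) 1 one_pos).1.ne'
  have hμCt : ∀ k, μ (C k) ≠ ⊤ := fun k => (hμ (z k) 1 one_pos).2.ne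
  have hDC : ∀ k, D k ⊆ C k := by
    intro k
    rw [hDdef]
    dsimp only
    split
    · exact subset_rfl
    · exact Set.empty_subset _
  have hDmeas : ∀ k, MeasurableSet (D k) := by
    intro k
    rw [hDdef]
    dsimp only
    split
    · exact measurableSet_ball
    · exact MeasurableSet.empty
  have hCdisj : ∀ k l : ℕ, k < l → ∀ y, y ∈ C k → y ∉ C l := by
    intro k l hkl y hyk hyl
    have hdist : dist (z k) (z l) ≥ 18 := by
      have : z k - z l = (β l - β k) • dichDir jstar := by
        rw [hzdef]; dsimp only; rw [← sub_smul]; ring_nf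
      rw [dist_eq_norm, this, norm_smul, dichDir_norm, mul_one, Real.norm_eq_abs]
      have hββ : β l - β k ≥ 18 := by
        have h1 := hβlb l
        have h2 := hβub k
        have h3 := hgmono k l hkl
        linarith
      rw [abs_of_nonneg (by linarith)]
      exact hββ
    rw [hCdef] at hyk hyl
    have h1 : dist y (z k) < 1 := Metric.mem_ball.mp hyk
    have h2 : dist y (z l) < 1 := Metric.mem_ball.mp hyl
    have := dist_triangle (z k) y (z l)
    rw [dist_comm (z k) y] at this
    linarith
  have hDunique : ∀ k l y, y ∈ D k → y ∈ D l → k = l := by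
    intro k l y hk hl
    by_contra hne
    rcases lt_or_gt_of_ne hne with hlt | hlt
    · exact hCdisj k l hlt y (hDC k hk) (hDC l hl)
    · exact hCdisj l k hlt y (hDC l hl) (hDC k hk)
  set a : ℕ → ℝ := fun k => (((k+1 : ℕ) : ℝ) * (F (β k + 1)).toReal) / (μ (C k)).toReal
    with hadef
  have ha0 : ∀ k, 0 ≤ a k := by
    intro k
    rw [hadef]
    positivity
  set f : EuclideanSpace ℝ (Fin 2) → ℝ := fun y =>
    if hy : ∃ k, y ∈ D k then a (Classical.choose hy) else 0 with hfdef
  have hfval : ∀ k y, y ∈ D k → f y = a k := by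
    intro k y hy
    rw [hfdef]
    dsimp only
    rw [dif_pos ⟨k, hy⟩]
    congr 1
    exact hDunique _ k y (Classical.choose_spec (⟨k, hy⟩ : ∃ l, y ∈ D l)) hy
  clear_value β z C D a f
  have hFβ0 : ∀ k, F (β k + 1) ≠ 0 := fun k => hF0 _ (by have := hβ297 k; linarith)
  have hofa : ∀ k, ENNReal.ofReal (a k) * μ (C k) = ((k+1 : ℕ) : ℝ≥0∞) * F (β k + 1) := by
    intro k
    have htr : ENNReal.ofReal (a k) = ((k+1 : ℕ) : ℝ≥0∞) * F (β k + 1) / μ (C k) := by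
      rw [hadef]
      dsimp only
      rw [ENNReal.ofReal_div_of_pos (ENNReal.toReal_pos (hμC0 k) (hμCt k)),
        ENNReal.ofReal_mul (by positivity), ENNReal.ofReal_natCast,
        ENNReal.ofReal_toReal (hFt _), ENNReal.ofReal_toReal (hμCt k)]
    rw [htr, ENNReal.div_mul_cancel (hμC0 k) (hμCt k)]
  -- the integral representation
  have hrep : ∀ s : Set (EuclideanSpace ℝ (Fin 2)),
      ∫⁻ y in s, ENNReal.ofReal |f y| ∂μ = ∑' k, ENNReal.ofReal (a k) * μ (D k ∩ s) := by
    intro s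
    have hptwise : ∀ y, ENNReal.ofReal |f y|
        = ∑' k, Set.indicator (D k) (fun _ => ENNReal.ofReal (a k)) y := by
      intro y
      by_cases hy : ∃ k, y ∈ D k
      · obtain ⟨k, hk⟩ := hy
        rw [tsum_eq_single k ?_]
        · rw [Set.indicator_of_mem hk, hfval k y hk, abs_of_nonneg (ha0 k)]
        · intro l hl
          refine Set.indicator_of_notMem (fun hyl => hl (hDunique l k y hyl hk)) _
      · push_neg at hy
        rw [hfdef]
        dsimp only
        rw [dif_neg (by push_neg; exact hy)]
        simp only [abs_zero, ENNReal.ofReal_zero]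
        symm
        refine ENNReal.tsum_eq_zero.mpr (fun k => Set.indicator_of_notMem (hy k) _)
    calc ∫⁻ y in s, ENNReal.ofReal |f y| ∂μ
        = ∫⁻ y in s, ∑' k, Set.indicator (D k) (fun _ => ENNReal.ofReal (a k)) y ∂μ :=
          lintegral_congr hptwise
      _ = ∑' k, ∫⁻ y in s, Set.indicator (D k) (fun _ => ENNReal.ofReal (a k)) y ∂μ :=
          lintegral_tsum (fun k => ((measurable_const.indicator (hDmeas k)).aemeasurable))
      _ = ∑' k, ENNReal.ofReal (a k) * μ (D k ∩ s) := by
          refine tsum_congr fun k => ?_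
          rw [lintegral_indicator (hDmeas k), setLIntegral_const,
            Measure.restrict_apply (hDmeas k)]
  -- Step 6: blow-up on the ball B(0, 1/2)
  have hblow : ∀ x ∈ Metric.ball (0 : EuclideanSpace ℝ (Fin 2)) (1/2 : ℝ),
      centeredMaximal μ f x = ⊤ := by
    intro x hx
    have hxn : ‖x‖ < 1/2 := by rwa [Metric.mem_ball, dist_zero_right] at hx
    have hkey : ∀ k, jf k = jstar → ((k+1 : ℕ) : ℝ≥0∞) ≤ centeredMaximal μ f x := by
      intro k hact
      have hr0 : (0:ℝ) < β k + 1/2 := by have := hβ297 k; linarith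
      have hCsub : C k ⊆ Metric.ball x (β k + 1/2) := by
        intro y hy
        rw [hCdef] at hy
        rw [Metric.mem_ball]
        have h1 : dist y (z k) < 1 := Metric.mem_ball.mp hy
        have h2 := dist_triangle y (z k) x
        have h3 : dist (z k) x ≤ ‖z k‖ + ‖x‖ := by
          rw [dist_eq_norm]
          exact norm_sub_le _ _
        rw [hzn k] at h3
        linarith
      have hDk : D k = C k := by rw [hDdef]; dsimp only; rw [if_pos hact]
      have hnum : ((k+1 : ℕ) : ℝ≥0∞) * F (β k + 1)
          ≤ ∫⁻ y in Metric.ball x (β k + 1/2), ENNReal.ofReal |f y| ∂μ := by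
        rw [hrep]
        calc ((k+1 : ℕ) : ℝ≥0∞) * F (β k + 1) = ENNReal.ofReal (a k) * μ (C k) := (hofa k).symm
          _ = ENNReal.ofReal (a k) * μ (D k ∩ Metric.ball x (β k + 1/2)) := by
              rw [hDk, Set.inter_eq_self_of_subset_left hCsub]
          _ ≤ ∑' l, ENNReal.ofReal (a l) * μ (D l ∩ Metric.ball x (β k + 1/2)) :=
              ENNReal.le_tsum k
      have hden : μ (Metric.ball x (β k + 1/2)) ≤ F (β k + 1) := by
        rw [← hFball]
        refine measure_mono fun y hy => ?_
        rw [Metric.mem_ball] at hy ⊢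
        rw [dist_zero_right]
        calc ‖y‖ = ‖y - x + x‖ := by rw [sub_add_cancel]
          _ ≤ ‖y - x‖ + ‖x‖ := norm_add_le _ _
          _ = dist y x + ‖x‖ := by rw [dist_eq_norm]
          _ < (β k + 1/2) + 1/2 := by linarith
          _ = β k + 1 := by ring
      calc ((k+1 : ℕ) : ℝ≥0∞)
          = ((k+1 : ℕ) : ℝ≥0∞) * F (β k + 1) / F (β k + 1) := by
            rw [mul_div_assoc, ENNReal.div_self (hFβ0 k) (hFt _), mul_one]
        _ ≤ (∫⁻ y in Metric.ball x (β k + 1/2), ENNReal.ofReal |f y| ∂μ) /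
              μ (Metric.ball x (β k + 1/2)) := ENNReal.div_le_div hnum hden
        _ ≤ centeredMaximal μ f x := by
            rw [centeredMaximal]
            exact le_iSup_of_le (β k + 1/2) (le_iSup_of_le hr0 le_rfl)
    by_contra hne
    obtain ⟨n, hn⟩ := ENNReal.exists_nat_gt hne
    obtain ⟨k, hk1, hk2⟩ := hjstar n
    have := hkey k hk2
    have hle : (n : ℝ≥0∞) ≤ ((k+1 : ℕ) : ℝ≥0∞) := by exact_mod_cast Nat.le_succ_of_le hk1
    exact absurd (le_trans hle this) (not_le.mpr hn)
  -- Step 7: finiteness at x₁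
  set x1 : EuclideanSpace ℝ (Fin 2) := (100:ℝ) • dichDir jstar with hx1def
  clear_value x1
  have hfin : centeredMaximal μ f x1 ≤ 2 := by
    rw [centeredMaximal]
    refine iSup_le fun r => iSup_le fun hr => ?_
    have hμB0 : μ (Metric.ball x1 r) ≠ 0 := (hμ x1 r hr).1.ne'
    have hμBt : μ (Metric.ball x1 r) ≠ ⊤ := (hμ x1 r hr).2.ne
    rw [hrep]
    have hterm : ∀ k, ENNReal.ofReal (a k) * μ (D k ∩ Metric.ball x1 r)
        ≤ (2⁻¹ : ℝ≥0∞)^k * μ (Metric.ball x1 r) := by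
      intro k
      by_cases hk0 : μ (D k ∩ Metric.ball x1 r) = 0
      · rw [hk0, mul_zero]; exact zero_le
      · have hact : jf k = jstar := by
          by_contra hc
          rw [hDdef] at hk0
          dsimp only at hk0
          rw [if_neg hc] at hk0
          simp at hk0
        have hDk : D k = C k := by rw [hDdef]; dsimp only; rw [if_pos hact]
        rw [hDk] at hk0
        obtain ⟨y, hyC0, hyB⟩ := nonempty_of_measure_ne_zero hk0
        have hyC : y ∈ Metric.ball (z k) 1 := by rw [hCdef] at hyC0; exact hyC0
        -- every point of C k is at distance ≥ β k + 97 from x1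
        have hrbig : β k + 97 < r := by
          have hzx : dist (z k) x1 = β k + 98 := by
            rw [dist_eq_norm, hzdef, hx1def]
            dsimp only
            rw [← sub_smul, norm_smul, dichDir_norm, mul_one, Real.norm_eq_abs]
            rw [abs_of_nonpos (by have := hβ297 k; linarith)]
            ring
          have h1 : dist y (z k) < 1 := Metric.mem_ball.mp hyC
          have h2 : dist y x1 < r := Metric.mem_ball.mp hyB
          have h3 := dist_triangle (z k) y x1
          rw [dist_comm (z k) y] at h3
          linarith [hzx ▸ h3]
        -- the heavy sector piece is inside the ball B(x1, r)
        have hsect : dichSector jstar ∩ H k ⊆ Metric.ball x1 r := by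
          intro w hw
          obtain ⟨hw1, hw2⟩ := hw
          rw [hHdef] at hw2
          obtain ⟨hw2a, hw2b⟩ := hw2
          have hwlb : t k ≤ ‖w‖ := by
            rw [Metric.mem_ball, dist_zero_right, not_lt] at hw2b
            exact hw2b
          have hwub : ‖w‖ < g k + 1 := by
            rw [Metric.mem_ball, dist_zero_right] at hw2a
            exact hw2a
          have h200 : 200 ≤ ‖w‖ := by have := ht_ge k; have := hg300 k; linarith
          have := sector_far jstar w hw1 h200
          rw [Metric.mem_ball, dist_eq_norm, hx1def]
          calc ‖w - (100:ℝ) • dichDir jstar‖ ≤ ‖w‖ - 25 := this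
            _ < g k - 24 := by linarith
            _ ≤ β k + 97 := by have := hβlb k; linarith
            _ < r := hrbig
        have hball : ((8*(k+1)^2*4^k : ℕ) : ℝ≥0∞) * F (g k - 1) ≤ μ (Metric.ball x1 r) := by
          have h4 : (4 : ℝ≥0∞) * (((8*(k+1)^2*4^k : ℕ) : ℝ≥0∞) * F (g k - 1))
              ≤ 4 * μ (Metric.ball x1 r) := by
            calc (4 : ℝ≥0∞) * (((8*(k+1)^2*4^k : ℕ) : ℝ≥0∞) * F (g k - 1))
                = ((32*(k+1)^2*4^k : ℕ) : ℝ≥0∞) * F (g k - 1) := by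
                  push_cast; ring
              _ ≤ μ (H k) := hH k
              _ ≤ 4 * μ (dichSector (jf k) ∩ H k) := hjf k
              _ = 4 * μ (dichSector jstar ∩ H k) := by rw [hact]
              _ ≤ 4 * μ (Metric.ball x1 r) := by
                  exact mul_le_mul_right (measure_mono hsect) 4
          exact (ENNReal.mul_le_mul_iff_right (by norm_num) (by norm_num)).mp h4
        -- conclude the per-term bound
        have hup : ENNReal.ofReal (a k) * μ (D k ∩ Metric.ball x1 r)
            ≤ ((k+1 : ℕ) : ℝ≥0∞) * (((Pn k : ℕ) : ℝ≥0∞) * F (g k - 1)) := by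
          calc ENNReal.ofReal (a k) * μ (D k ∩ Metric.ball x1 r)
              ≤ ENNReal.ofReal (a k) * μ (C k) :=
                mul_le_mul_right (measure_mono (le_trans (Set.inter_subset_left) (hDk ▸ subset_rfl))) _
            _ = ((k+1 : ℕ) : ℝ≥0∞) * F (β k + 1) := hofa k
            _ ≤ ((k+1 : ℕ) : ℝ≥0∞) * (((Pn k : ℕ) : ℝ≥0∞) * F (g k - 1)) := by
                refine mul_le_mul_right ?_ _
                refine le_trans (hFmono (by rw [hβdef]; dsimp; linarith : β k + 1 ≤ t k - 1)) ?_
                exact ht1 k (t k - 1) (by linarith)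
        have hmul : (2:ℝ≥0∞)^k * (((k+1 : ℕ) : ℝ≥0∞) * (((Pn k : ℕ) : ℝ≥0∞) * F (g k - 1)))
            ≤ μ (Metric.ball x1 r) := by
          calc (2:ℝ≥0∞)^k * (((k+1 : ℕ) : ℝ≥0∞) * (((Pn k : ℕ) : ℝ≥0∞) * F (g k - 1)))
              = ((2^k * ((k+1) * Pn k) : ℕ) : ℝ≥0∞) * F (g k - 1) := by
                push_cast; ring
            _ = ((8*(k+1)^2*4^k : ℕ) : ℝ≥0∞) * F (g k - 1) := by
                congr 2
                have hPnk : Pn k = 8*(k+1)*2^k := by rw [hPn]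
                have h4 : (4:ℕ)^k = 2^k * 2^k := by rw [show (4:ℕ) = 2*2 by norm_num, mul_pow]
                rw [hPnk, h4]; ring
            _ ≤ μ (Metric.ball x1 r) := hball
        calc ENNReal.ofReal (a k) * μ (D k ∩ Metric.ball x1 r)
            ≤ μ (Metric.ball x1 r) / (2:ℝ≥0∞)^k := by
              rw [ENNReal.le_div_iff_mul_le (Or.inl (by positivity)) (Or.inl (by
                exact ENNReal.pow_ne_top ENNReal.ofNat_ne_top))]
              rw [mul_comm] at hmul
              exact le_trans (mul_le_mul_left hup _) hmul
          _ = (2⁻¹ : ℝ≥0∞)^k * μ (Metric.ball x1 r) := by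
              rw [div_eq_mul_inv, ← ENNReal.inv_pow, mul_comm]
    calc (∑' k, ENNReal.ofReal (a k) * μ (D k ∩ Metric.ball x1 r)) / μ (Metric.ball x1 r)
        ≤ (∑' k : ℕ, (2⁻¹ : ℝ≥0∞)^k * μ (Metric.ball x1 r)) / μ (Metric.ball x1 r) :=
          ENNReal.div_le_div (ENNReal.tsum_le_tsum hterm) le_rfl
      _ = ((∑' k : ℕ, (2⁻¹ : ℝ≥0∞)^k) * μ (Metric.ball x1 r)) / μ (Metric.ball x1 r) := by
          rw [ENNReal.tsum_mul_right]
      _ = (2 * μ (Metric.ball x1 r)) / μ (Metric.ball x1 r) := by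
          rw [ENNReal.tsum_geometric]
          congr 2
          rw [ENNReal.one_sub_inv_two]
          simp
      _ ≤ 2 := by
          rw [ENNReal.div_le_iff_le_mul (Or.inl hμB0) (Or.inl hμBt)]
  -- Step 8: local integrability
  have hloc : LocallyIntegrableBall μ f := by
    intro c r hr
    rw [hrep]
    obtain ⟨n0, hn0⟩ := exists_nat_gt (r + ‖c‖)
    have hvanish : ∀ k, k ∉ Finset.range n0 →
        ENNReal.ofReal (a k) * μ (D k ∩ Metric.ball c r) = 0 := by
      intro k hk
      rw [Finset.mem_range, not_lt] at hk
      have hempty : C k ∩ Metric.ball c r = ∅ := by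
        rw [Set.eq_empty_iff_forall_notMem]
        rintro y ⟨hy1, hy2⟩
        have hy1' : y ∈ Metric.ball (z k) 1 := by rw [hCdef] at hy1; exact hy1
        have h1 : dist y (z k) < 1 := Metric.mem_ball.mp hy1'
        have h2 : dist y c < r := Metric.mem_ball.mp hy2
        have h3 : ‖z k‖ ≤ dist y (z k) + dist y c + ‖c‖ := by
          have := dist_triangle (z k) y c
          rw [dist_comm (z k) y] at this
          have h4 : dist (z k) c ≥ ‖z k‖ - ‖c‖ := by
            rw [dist_eq_norm]
            have := norm_sub_norm_le (z k) c
            linarith [this]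
          linarith
        have h5 : 295 + 20*(k:ℝ) ≤ ‖z k‖ := by
          rw [hzn k]
          have := hβlb k
          have := hglin k
          linarith
        have h6 : (n0:ℝ) ≤ k := by exact_mod_cast hk
        linarith
      have : D k ∩ Metric.ball c r = ∅ :=
        Set.eq_empty_of_subset_empty (le_trans (Set.inter_subset_inter_left _ (hDC k))
          hempty.le)
      rw [this]
      simp
    rw [tsum_eq_sum hvanish]
    refine ENNReal.sum_lt_top.mpr fun k _ => ?_
    exact ENNReal.mul_lt_top ENNReal.ofReal_lt_top
      (lt_of_le_of_lt (measure_mono Set.inter_subset_right) (hμ c r hr).2)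
  -- Step 9: assemble everything
  have hxball : (0 : EuclideanSpace ℝ (Fin 2)) ∈ Metric.ball (0 : EuclideanSpace ℝ (Fin 2))
      (1/2 : ℝ) := by
    rw [Metric.mem_ball, dist_self]; norm_num
  have hsubset : Metric.ball (0 : EuclideanSpace ℝ (Fin 2)) (1/2 : ℝ)
      ⊆ {x | centeredMaximal μ f x = ⊤} := fun x hx => hblow x hx
  have hpos : 0 < μ {x | centeredMaximal μ f x = ⊤} :=
    lt_of_lt_of_le (hμ 0 (1/2) (by norm_num)).1 (measure_mono hsubset)
  have hx1fin : centeredMaximal μ f x1 < ⊤ :=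
    lt_of_le_of_lt hfin (by norm_num)
  refine ⟨f, hloc, ⟨0, hblow 0 hxball⟩, hpos, ⟨x1, hx1fin⟩, ?_⟩
  rintro (h1 | h2)
  · exact absurd h1 hpos.ne'
  · have : centeredMaximal μ f x1 = ⊤ := by
      have : x1 ∈ {x | centeredMaximal μ f x = ⊤} := h2 ▸ Set.mem_univ x1
      exact this
    exact absurd this hx1fin.ne
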